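/- Cancellation for strong bisimilarity in microCCS: for all processes P, Q, R, if P‖R ∼ Q‖R then P ∼ Q. -/

import Mathlib

/-- CCS visible actions: a name `a` or a coname `ā`. -/
inductive Act where
  | inp : ℕ → Act
  | out : ℕ → Act
deriving DecidableEq

/-- The coaction. -/
def Act.co : Act → Act
  | .inp a => .out a
  | .out a => .inp a

/-- MicroCCS processes: nil, prefix, parallel composition. -/
inductive Proc where
  | nil : Proc
  | pre : Act → Proc → Proc
  | par : Proc → Proc → Proc
deriving DecidableEq

/-- Transition labels: a visible action or τ. -/
inductive Lab where
  | act : Act → Lab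
  | tau : Lab
deriving DecidableEq

/-- The standard CCS labelled transition system on microCCS. -/
inductive Step : Proc → Lab → Proc → Prop where
  | pre (η : Act) (P : Proc) : Step (.pre η P) (.act η) P
  | syn {P P' Q Q' : Proc} {η : Act} :
      Step P (.act η) P' → Step Q (.act η.co) Q' →
      Step (.par P Q) .tau (.par P' Q')
  | parL {P P' : Proc} {μ : Lab} (Q : Proc) :
      Step P μ P' → Step (.par P Q) μ (.par P' Q)
  | parR {Q Q' : Proc} {μ : Lab} (P : Proc) :
      Step Q μ Q' → Step (.par P Q) μ (.par P Q')

/-- A (symmetric) bisimulation. -/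
def IsBisim (R : Proc → Proc → Prop) : Prop :=
  (∀ P Q, R P Q → R Q P) ∧
  ∀ P Q μ P', R P Q → Step P μ P' → ∃ Q', Step Q μ Q' ∧ R P' Q'

/-- Strong bisimilarity: the union of all bisimulations. -/
def Bisim (P Q : Proc) : Prop := ∃ R, IsBisim R ∧ R P Q

/-- The size of a process: its number of prefixes. -/
def Proc.size : Proc → ℕ
  | .nil => 0
  | .pre _ P => 1 + P.size
  | .par P Q => P.size + Q.size

/-- Structural congruence: abelian monoid laws for parallel composition. -/
inductive SC : Proc → Proc → Prop where
  | refl (P) : SC P P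
  | symm : SC P Q → SC Q P
  | trans : SC P Q → SC Q R → SC P R
  | comm (P Q) : SC (.par P Q) (.par Q P)
  | assoc (P Q R) : SC (.par P (.par Q R)) (.par (.par P Q) R)
  | unit (P) : SC (.par P .nil) P
  | pre (η) : SC P Q → SC (.pre η P) (.pre η Q)
  | par : SC P P' → SC Q Q' → SC (.par P Q) (.par P' Q')

/-- `pow P k` is the k-fold parallel composition of `P`. -/
def pow (P : Proc) : ℕ → Proc
  | 0 => .nil
  | n+1 => .par P (pow P n)

/-- One step of rewriting with the distribution law
    `η.(P ‖ (η.P)^k) ⇝ (η.P)^{k+1}` (k ≥ 1), modulo structural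
    congruence, in any context. -/
inductive RW : Proc → Proc → Prop where
  | head {η : Act} {P : Proc} {k : ℕ} (hk : 1 ≤ k) :
      RW (.pre η (.par P (pow (.pre η P) k))) (pow (.pre η P) (k+1))
  | pre (η) : RW P P' → RW (.pre η P) (.pre η P')
  | parL (Q) : RW P P' → RW (.par P Q) (.par P' Q)
  | parR (P) : RW Q Q' → RW (.par P Q) (.par P Q')
  | congr : SC P P₁ → RW P₁ P₂ → SC P₂ P' → RW P P'

/-- Reflexive-transitive closure of the distribution rewriting. -/
def Rws : Proc → Proc → Prop := Relation.ReflTransGen RW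

/-- Normal forms for the distribution rewriting. -/
def NF (P : Proc) : Prop := ¬ ∃ P', RW P P'

/-- Prime processes. -/
def IsPrime (P : Proc) : Prop :=
  ¬ Bisim P .nil ∧ ∀ Q R, Bisim P (.par Q R) → Bisim Q .nil ∨ Bisim R .nil

namespace MC
open Proc Lab Act

theorem co_co (η : Act) : η.co.co = η := by cases η <;> rfl
theorem co_ne (η : Act) : η.co ≠ η := by cases η <;> simp [Act.co]

theorem step_nil {μ : Lab} {T : Proc} : ¬ Step .nil μ T := by intro h; cases h

theorem step_pre_inv {η P μ T} (h : Step (.pre η P) μ T) : μ = .act η ∧ T = P := by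
  cases h; exact ⟨rfl, rfl⟩

theorem step_par_inv {A B μ T} (h : Step (.par A B) μ T) :
    (∃ A', Step A μ A' ∧ T = .par A' B) ∨
    (∃ B', Step B μ B' ∧ T = .par A B') ∨
    (∃ η A' B', μ = .tau ∧ Step A (.act η) A' ∧ Step B (.act η.co) B' ∧ T = .par A' B') := by
  cases h with
  | syn h1 h2 => exact .inr (.inr ⟨_, _, _, rfl, h1, h2, rfl⟩)
  | parL _ h => exact .inl ⟨_, h, rfl⟩
  | parR _ h => exact .inr (.inl ⟨_, h, rfl⟩)

theorem bisim_step {P Q μ P'} (h : Bisim P Q) (hs : Step P μ P') :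
    ∃ Q', Step Q μ Q' ∧ Bisim P' Q' := by
  obtain ⟨R, hR, hPQ⟩ := h
  obtain ⟨Q', hQ, h'⟩ := hR.2 _ _ _ _ hPQ hs
  exact ⟨Q', hQ, R, hR, h'⟩

theorem bsymm {P Q} (h : Bisim P Q) : Bisim Q P := by
  obtain ⟨R, hR, hPQ⟩ := h; exact ⟨R, hR, hR.1 _ _ hPQ⟩

theorem bisim_refl (P : Proc) : Bisim P P :=
  ⟨Eq, ⟨fun _ _ h => h.symm, by rintro P Q μ P' rfl hs; exact ⟨P', hs, rfl⟩⟩, rfl⟩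

theorem btrans {P Q R} (h1 : Bisim P Q) (h2 : Bisim Q R) : Bisim P R := by
  refine ⟨fun A C => ∃ B, Bisim A B ∧ Bisim B C, ⟨?_, ?_⟩, ⟨Q, h1, h2⟩⟩
  · rintro A C ⟨B, hAB, hBC⟩; exact ⟨B, bsymm hBC, bsymm hAB⟩
  · rintro A C μ A' ⟨B, hAB, hBC⟩ hs
    obtain ⟨B', hB, h1'⟩ := bisim_step hAB hs
    obtain ⟨C', hC, h2'⟩ := bisim_step hBC hB
    exact ⟨C', hC, B', h1', h2'⟩

theorem bisim_par_right {A B} (C) (h : Bisim A B) : Bisim (.par A C) (.par B C) := by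
  refine ⟨fun X Y => ∃ A B C, Bisim A B ∧ X = .par A C ∧ Y = .par B C, ⟨?_, ?_⟩,
    ⟨A, B, C, h, rfl, rfl⟩⟩
  · rintro X Y ⟨A, B, C, h, rfl, rfl⟩; exact ⟨B, A, C, bsymm h, rfl, rfl⟩
  · rintro X Y μ X' ⟨A, B, C, h, rfl, rfl⟩ hs
    rcases step_par_inv hs with ⟨A', hA, rfl⟩ | ⟨C', hC, rfl⟩ | ⟨η, A', C', rfl, hA, hC, rfl⟩
    · obtain ⟨B', hB, h'⟩ := bisim_step h hA
      exact ⟨.par B' C, .parL _ hB, A', B', C, h', rfl, rfl⟩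
    · exact ⟨.par B C', .parR _ hC, A, B, C', h, rfl, rfl⟩
    · obtain ⟨B', hB, h'⟩ := bisim_step h hA
      exact ⟨.par B' C', .syn hB hC, A', B', C', h', rfl, rfl⟩

theorem sc_moves {P Q} (h : SC P Q) :
    (∀ μ P', Step P μ P' → ∃ Q', Step Q μ Q' ∧ SC P' Q') ∧
    (∀ μ Q', Step Q μ Q' → ∃ P', Step P μ P' ∧ SC P' Q') := by
  induction h with
  | refl P => exact ⟨fun μ P' h => ⟨P', h, .refl _⟩, fun μ Q' h => ⟨Q', h, .refl _⟩⟩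
  | symm h ih =>
    refine ⟨fun μ X hs => ?_, fun μ X hs => ?_⟩
    · obtain ⟨Y, hY, hsc⟩ := ih.2 μ X hs; exact ⟨Y, hY, hsc.symm⟩
    · obtain ⟨Y, hY, hsc⟩ := ih.1 μ X hs; exact ⟨Y, hY, hsc.symm⟩
  | trans h1 h2 ih1 ih2 =>
    refine ⟨fun μ X hs => ?_, fun μ X hs => ?_⟩
    · obtain ⟨Y, hY, s1⟩ := ih1.1 μ X hs
      obtain ⟨Z, hZ, s2⟩ := ih2.1 μ Y hY
      exact ⟨Z, hZ, s1.trans s2⟩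
    · obtain ⟨Y, hY, s1⟩ := ih2.2 μ X hs
      obtain ⟨Z, hZ, s2⟩ := ih1.2 μ Y hY
      exact ⟨Z, hZ, s2.trans s1⟩
  | comm P Q =>
    refine ⟨fun μ X hs => ?_, fun μ X hs => ?_⟩
    · rcases step_par_inv hs with ⟨A', hA, rfl⟩ | ⟨B', hB, rfl⟩ | ⟨η, A', B', rfl, hA, hB, rfl⟩
      · exact ⟨.par Q A', .parR _ hA, .comm _ _⟩
      · exact ⟨.par B' P, .parL _ hB, .comm _ _⟩
      · refine ⟨.par B' A', .syn hB ?_, .comm _ _⟩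
        rw [co_co]; exact hA
    · rcases step_par_inv hs with ⟨A', hA, rfl⟩ | ⟨B', hB, rfl⟩ | ⟨η, A', B', rfl, hA, hB, rfl⟩
      · exact ⟨.par P A', .parR _ hA, .comm _ _⟩
      · exact ⟨.par B' Q, .parL _ hB, .comm _ _⟩
      · refine ⟨.par B' A', .syn hB ?_, .comm _ _⟩
        rw [co_co]; exact hA
  | assoc P Q R =>
    refine ⟨fun μ X hs => ?_, fun μ X hs => ?_⟩
    · rcases step_par_inv hs with ⟨A', hA, rfl⟩ | ⟨B', hB, rfl⟩ | ⟨η, A', B', rfl, hA, hB, rfl⟩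
      · exact ⟨.par (.par A' Q) R, .parL _ (.parL _ hA), .assoc _ _ _⟩
      · rcases step_par_inv hB with ⟨Q', hQ, rfl⟩ | ⟨R', hR, rfl⟩ | ⟨η, Q', R', rfl, hQ, hR, rfl⟩
        · exact ⟨.par (.par P Q') R, .parL _ (.parR _ hQ), .assoc _ _ _⟩
        · exact ⟨.par (.par P Q) R', .parR _ hR, .assoc _ _ _⟩
        · exact ⟨.par (.par P Q') R', .syn (.parR _ hQ) hR, .assoc _ _ _⟩
      · rcases step_par_inv hB with ⟨Q', hQ, rfl⟩ | ⟨R', hR, rfl⟩ | ⟨η', Q', R', heq, hQ, hR, rfl⟩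
        · exact ⟨.par (.par A' Q') R, .parL _ (.syn hA hQ), .assoc _ _ _⟩
        · exact ⟨.par (.par A' Q) R', .syn (.parL _ hA) hR, .assoc _ _ _⟩
        · exact absurd heq (by simp)
    · rcases step_par_inv hs with ⟨A', hA, rfl⟩ | ⟨B', hB, rfl⟩ | ⟨η, A', B', rfl, hA, hB, rfl⟩
      · rcases step_par_inv hA with ⟨P', hP, rfl⟩ | ⟨Q', hQ, rfl⟩ | ⟨η, P', Q', rfl, hP, hQ, rfl⟩
        · exact ⟨.par P' (.par Q R), .parL _ hP, .assoc _ _ _⟩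
        · exact ⟨.par P (.par Q' R), .parR _ (.parL _ hQ), .assoc _ _ _⟩
        · exact ⟨.par P' (.par Q' R), .syn hP (.parL _ hQ), .assoc _ _ _⟩
      · exact ⟨.par P (.par Q B'), .parR _ (.parR _ hB), .assoc _ _ _⟩
      · rcases step_par_inv hA with ⟨P', hP, rfl⟩ | ⟨Q', hQ, rfl⟩ | ⟨η', P', Q', heq, hP, hQ, rfl⟩
        · exact ⟨.par P' (.par Q B'), .syn hP (.parR _ hB), .assoc _ _ _⟩
        · exact ⟨.par P (.par Q' B'), .parR _ (.syn hQ hB), .assoc _ _ _⟩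
        · exact absurd heq (by simp)
  | unit P =>
    refine ⟨fun μ X hs => ?_, fun μ X hs => ?_⟩
    · rcases step_par_inv hs with ⟨A', hA, rfl⟩ | ⟨B', hB, rfl⟩ | ⟨η, A', B', rfl, hA, hB, rfl⟩
      · exact ⟨A', hA, .unit _⟩
      · exact absurd hB step_nil
      · exact absurd hB step_nil
    · exact ⟨.par X .nil, .parL _ hs, .unit _⟩
  | pre η h ih =>
    refine ⟨fun μ X hs => ?_, fun μ X hs => ?_⟩
    · obtain ⟨rfl, rfl⟩ := step_pre_inv hs
      exact ⟨_, .pre _ _, h⟩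
    · obtain ⟨rfl, rfl⟩ := step_pre_inv hs
      exact ⟨_, .pre _ _, h⟩
  | par h1 h2 ih1 ih2 =>
    rename_i P₀ P₀' Q₀ Q₀'
    refine ⟨fun μ X hs => ?_, fun μ X hs => ?_⟩
    · rcases step_par_inv hs with ⟨A', hA, rfl⟩ | ⟨B', hB, rfl⟩ | ⟨η, A', B', rfl, hA, hB, rfl⟩
      · obtain ⟨Y, hY, s⟩ := ih1.1 _ _ hA
        exact ⟨.par Y Q₀', .parL _ hY, .par s h2⟩
      · obtain ⟨Y, hY, s⟩ := ih2.1 _ _ hB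
        exact ⟨.par P₀' Y, .parR _ hY, .par h1 s⟩
      · obtain ⟨Y, hY, s⟩ := ih1.1 _ _ hA
        obtain ⟨Z, hZ, s'⟩ := ih2.1 _ _ hB
        exact ⟨.par Y Z, .syn hY hZ, .par s s'⟩
    · rcases step_par_inv hs with ⟨A', hA, rfl⟩ | ⟨B', hB, rfl⟩ | ⟨η, A', B', rfl, hA, hB, rfl⟩
      · obtain ⟨Y, hY, s⟩ := ih1.2 _ _ hA
        exact ⟨.par Y Q₀, .parL _ hY, .par s h2⟩
      · obtain ⟨Y, hY, s⟩ := ih2.2 _ _ hB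
        exact ⟨.par P₀ Y, .parR _ hY, .par h1 s⟩
      · obtain ⟨Y, hY, s⟩ := ih1.2 _ _ hA
        obtain ⟨Z, hZ, s'⟩ := ih2.2 _ _ hB
        exact ⟨.par Y Z, .syn hY hZ, .par s s'⟩

theorem sc_bisim {P Q} (h : SC P Q) : Bisim P Q := by
  refine ⟨SC, ⟨fun _ _ h => h.symm, ?_⟩, h⟩
  rintro A B μ A' hAB hs
  exact (sc_moves hAB).1 μ A' hs

end MC
namespace MC

theorem step_size_act {P η P'} (h : Step P (.act η) P') : P.size = P'.size + 1 := by
  generalize hμ : Lab.act η = μ at h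
  induction h with
  | pre => simp [Proc.size]; omega
  | syn h1 h2 ih1 ih2 => exact absurd hμ (by simp)
  | parL Q h ih => have := ih hμ; simp [Proc.size]; omega
  | parR P h ih => have := ih hμ; simp [Proc.size]; omega

theorem step_size_tau {P P'} (h : Step P .tau P') : P.size = P'.size + 2 := by
  generalize hμ : Lab.tau = μ at h
  induction h with
  | pre => exact absurd hμ (by simp)
  | syn h1 h2 ih1 ih2 =>
    have := step_size_act h1; have := step_size_act h2
    simp [Proc.size]; omega
  | parL Q h ih => have := ih hμ; simp [Proc.size]; omega
  | parR P h ih => have := ih hμ; simp [Proc.size]; omega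

theorem size_pos_of_step {P μ P'} (h : Step P μ P') : 0 < P.size := by
  cases μ with
  | act η => have := step_size_act h; omega
  | tau => have := step_size_tau h; omega

theorem exists_visible {P : Proc} (h : 0 < P.size) : ∃ η P', Step P (.act η) P' := by
  induction P with
  | nil => simp [Proc.size] at h
  | pre η P ih => exact ⟨η, P, .pre _ _⟩
  | par A B ihA ihB =>
    by_cases hA : 0 < A.size
    · obtain ⟨η, A', hs⟩ := ihA hA
      exact ⟨η, _, .parL _ hs⟩
    · have hB : 0 < B.size := by simp [Proc.size] at h; omega
      obtain ⟨η, B', hs⟩ := ihB hB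
      exact ⟨η, _, .parR _ hs⟩

theorem size_eq_of_bisim : ∀ (n : ℕ) {P Q}, P.size ≤ n → Bisim P Q → P.size = Q.size := by
  intro n
  induction n with
  | zero =>
    intro P Q hP h
    by_contra hne
    have hQ : 0 < Q.size := by omega
    obtain ⟨η, Q', hs⟩ := exists_visible hQ
    obtain ⟨P', hP', _⟩ := bisim_step (bsymm h) hs
    have := size_pos_of_step hP'; omega
  | succ n ih =>
    intro P Q hP h
    by_cases h0 : P.size = 0
    · by_contra hne
      have hQ : 0 < Q.size := by omega
      obtain ⟨η, Q', hs⟩ := exists_visible hQ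
      obtain ⟨P', hP', _⟩ := bisim_step (bsymm h) hs
      have := size_pos_of_step hP'; omega
    · have hPpos : 0 < P.size := by omega
      obtain ⟨η, P', hs⟩ := exists_visible hPpos
      obtain ⟨Q', hQ', h'⟩ := bisim_step h hs
      have e1 := step_size_act hs
      have e2 := step_size_act hQ'
      have := ih (P := P') (Q := Q') (by omega) h'
      omega

theorem bisim_size {P Q} (h : Bisim P Q) : P.size = Q.size :=
  size_eq_of_bisim P.size le_rfl h

theorem bisim_nil_of_size_zero {P} (h : P.size = 0) : Bisim P .nil := by
  refine ⟨fun X Y => X.size = 0 ∧ Y.size = 0, ⟨fun _ _ h => ⟨h.2, h.1⟩, ?_⟩, h, rfl⟩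
  rintro X Y μ X' ⟨hX, _⟩ hs
  exact absurd (size_pos_of_step hs) (by omega)

theorem bisim_nil_iff {P} : Bisim P .nil ↔ P.size = 0 := by
  constructor
  · intro h; simpa [Proc.size] using bisim_size h
  · exact bisim_nil_of_size_zero

theorem bisim_par_left {C D} (A) (h : Bisim C D) : Bisim (.par A C) (.par A D) :=
  btrans (sc_bisim (SC.comm _ _))
    (btrans (bisim_par_right A h) (sc_bisim (SC.comm _ _)))

theorem bisim_par {A B C D} (h1 : Bisim A B) (h2 : Bisim C D) :
    Bisim (.par A C) (.par B D) :=
  btrans (bisim_par_right C h1) (bisim_par_left B h2)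

/-- fold a list of processes into a parallel composition -/
def prodL : List Proc → Proc
  | [] => .nil
  | p :: l => .par p (prodL l)

theorem sc_prod_append (l₁ l₂ : List Proc) :
    SC (prodL (l₁ ++ l₂)) (.par (prodL l₁) (prodL l₂)) := by
  induction l₁ with
  | nil => exact SC.trans (SC.symm (SC.unit _)) (SC.comm _ _)
  | cons p l₁ ih => exact SC.trans (SC.par (SC.refl p) ih) (SC.assoc _ _ _)

theorem sc_prod_perm {l₁ l₂ : List Proc} (h : l₁.Perm l₂) : SC (prodL l₁) (prodL l₂) := by
  induction h with
  | nil => exact SC.refl _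
  | cons x h ih => exact SC.par (SC.refl x) ih
  | swap x y l =>
    exact SC.trans (SC.assoc _ _ _) (SC.trans (SC.par (SC.comm _ _) (SC.refl _))
      (SC.symm (SC.assoc _ _ _)))
  | trans h1 h2 ih1 ih2 => exact ih1.trans ih2

theorem bisim_prod_forall₂ {l₁ l₂ : List Proc} (h : List.Forall₂ Bisim l₁ l₂) :
    Bisim (prodL l₁) (prodL l₂) := by
  induction h with
  | nil => exact bisim_refl _
  | cons h _ ih => exact bisim_par h ih

theorem prod_step_inv {l : List Proc} {η T} (h : Step (prodL l) (.act η) T) :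
    ∃ p p' l', Step p (.act η) p' ∧ l.Perm (p :: l') ∧ Bisim T (prodL (p' :: l')) := by
  induction l generalizing T with
  | nil => exact absurd h step_nil
  | cons q rest ih =>
    rcases step_par_inv h with ⟨q', hq, rfl⟩ | ⟨T₂, hT₂, rfl⟩ | ⟨η', A', B', heq, _, _, _⟩
    · exact ⟨q, q', rest, hq, List.Perm.refl _, bisim_refl _⟩
    · obtain ⟨p, p', l₂, hp, hperm, hbis⟩ := ih hT₂
      refine ⟨p, p', q :: l₂, hp, ?_, ?_⟩
      · exact (List.Perm.cons q hperm).trans (List.Perm.swap p q l₂)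
      · exact btrans (bisim_par_left q hbis) (sc_bisim (sc_prod_perm (List.Perm.swap p' q l₂)))
    · exact absurd heq (by simp)

theorem size_prod (l : List Proc) : (prodL l).size = (l.map Proc.size).sum := by
  induction l with
  | nil => rfl
  | cons p l ih => simp [prodL, Proc.size, ih]

/-- Quotient by bisimilarity -/
instance bisimSetoid : Setoid Proc :=
  ⟨Bisim, ⟨bisim_refl, fun h => bsymm h, fun h1 h2 => btrans h1 h2⟩⟩

abbrev Cl := Quotient bisimSetoid

noncomputable instance : DecidableEq Cl := Classical.decEq _

def cls (P : Proc) : Cl := Quotient.mk _ P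

theorem cls_eq {P Q} : cls P = cls Q ↔ Bisim P Q := by
  constructor
  · exact fun h => Quotient.exact h
  · exact fun h => Quotient.sound h

def csize : Cl → ℕ := Quotient.lift Proc.size (fun _ _ h => bisim_size h)

@[simp] theorem csize_cls (P : Proc) : csize (cls P) = P.size := rfl

theorem prime_congr {p q} (hb : Bisim p q) (h : IsPrime p) : IsPrime q := by
  obtain ⟨h1, h2⟩ := h
  refine ⟨fun hc => h1 (btrans hb hc), fun A B hc => h2 A B (btrans hb hc)⟩

theorem not_prime_split {X} (h1 : ¬ Bisim X .nil) (h2 : ¬ IsPrime X) :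
    ∃ A B, Bisim X (.par A B) ∧ ¬ Bisim A .nil ∧ ¬ Bisim B .nil := by
  unfold IsPrime at h2
  push_neg at h2
  exact h2 h1

theorem exists_prime_list : ∀ (n : ℕ) (X : Proc), X.size ≤ n →
    ∃ l : List Proc, (∀ p ∈ l, IsPrime p) ∧ Bisim X (prodL l) := by
  intro n
  induction n with
  | zero =>
    intro X hX
    exact ⟨[], by simp, bisim_nil_of_size_zero (by omega)⟩
  | succ n ih =>
    intro X hX
    by_cases h0 : X.size = 0
    · exact ⟨[], by simp, bisim_nil_of_size_zero h0⟩
    by_cases hp : IsPrime X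
    · exact ⟨[X], by simpa using hp, sc_bisim (SC.symm (SC.unit X))⟩
    · have hnil : ¬ Bisim X .nil := by
        intro hc; exact h0 (bisim_nil_iff.1 hc)
      obtain ⟨A, B, hAB, hA, hB⟩ := not_prime_split hnil hp
      have hsz : A.size + B.size = X.size := by
        have := bisim_size hAB; simp [Proc.size] at this; omega
      have hA0 : 0 < A.size := by
        rcases Nat.eq_zero_or_pos A.size with h | h
        · exact absurd (bisim_nil_of_size_zero h) hA
        · exact h
      have hB0 : 0 < B.size := by
        rcases Nat.eq_zero_or_pos B.size with h | h
        · exact absurd (bisim_nil_of_size_zero h) hB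
        · exact h
      obtain ⟨lA, hlA, hbA⟩ := ih A (by omega)
      obtain ⟨lB, hlB, hbB⟩ := ih B (by omega)
      refine ⟨lA ++ lB, ?_, ?_⟩
      · intro p hp'
        rcases List.mem_append.1 hp' with h | h
        · exact hlA p h
        · exact hlB p h
      · exact btrans hAB (btrans (bisim_par hbA hbB) (sc_bisim (SC.symm (sc_prod_append _ _))))

end MC
namespace MC

theorem prime_size_pos {p : Proc} (h : IsPrime p) : 0 < p.size := by
  rcases Nat.eq_zero_or_pos p.size with h0 | h0
  · exact absurd (bisim_nil_of_size_zero h0) h.1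
  · exact h0

theorem size_prod_cons (p : Proc) (l : List Proc) :
    (prodL (p :: l)).size = p.size + (prodL l).size := by simp [prodL, Proc.size]

theorem size_prod_perm {l₁ l₂ : List Proc} (h : l₁.Perm l₂) :
    (prodL l₁).size = (prodL l₂).size := bisim_size (sc_bisim (sc_prod_perm h))

theorem size_le_of_mem {p : Proc} {l : List Proc} (h : p ∈ l) : p.size ≤ (prodL l).size := by
  have := size_prod_perm (List.perm_cons_erase h)
  rw [this, size_prod_cons]; omega

theorem exists_min_size {l : List Proc} (h : l ≠ []) :
    ∃ p ∈ l, ∀ x ∈ l, p.size ≤ x.size := by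
  induction l with
  | nil => exact absurd rfl h
  | cons a t ih =>
    rcases eq_or_ne t [] with rfl | ht
    · exact ⟨a, by simp, by simp⟩
    · obtain ⟨m, hm, hmin⟩ := ih ht
      rcases le_or_gt a.size m.size with hle | hlt
      · refine ⟨a, by simp, ?_⟩
        intro x hx
        rcases List.mem_cons.1 hx with rfl | hx
        · exact le_rfl
        · exact le_trans hle (hmin x hx)
      · refine ⟨m, List.mem_cons_of_mem _ hm, ?_⟩
        intro x hx
        rcases List.mem_cons.1 hx with rfl | hx
        · omega
        · exact hmin x hx

theorem exists_max_size {l : List Proc} (h : l ≠ []) :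
    ∃ p ∈ l, ∀ x ∈ l, x.size ≤ p.size := by
  induction l with
  | nil => exact absurd rfl h
  | cons a t ih =>
    rcases eq_or_ne t [] with rfl | ht
    · exact ⟨a, by simp, by simp⟩
    · obtain ⟨m, hm, hmax⟩ := ih ht
      rcases le_or_gt m.size a.size with hle | hlt
      · refine ⟨a, by simp, ?_⟩
        intro x hx
        rcases List.mem_cons.1 hx with rfl | hx
        · exact le_rfl
        · exact le_trans (hmax x hx) hle
      · refine ⟨m, List.mem_cons_of_mem _ hm, ?_⟩
        intro x hx
        rcases List.mem_cons.1 hx with rfl | hx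
        · omega
        · exact hmax x hx

theorem sum_sizes_eq (l : List Proc) : ((l.map cls).map csize).sum = (prodL l).size := by
  induction l with
  | nil => rfl
  | cons p t ih =>
    simp only [List.map_map] at ih ⊢
    simp [prodL, Proc.size, ih]

/-- counting classes in a mapped list -/
theorem count_map_pos {l : List Proc} {c : Cl} (h : 0 < (l.map cls).count c) :
    ∃ p ∈ l, cls p = c := by
  have : c ∈ l.map cls := List.count_pos_iff.1 h
  obtain ⟨p, hp, rfl⟩ := List.mem_map.1 this
  exact ⟨p, hp, rfl⟩

/-- The attack lemma for unique prime decomposition. -/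
theorem upd_attack {n : ℕ}
    (ihU : ∀ (Y : Proc) (m₁ m₂ : List Proc), 2 * Y.size < n →
      (∀ p ∈ m₁, IsPrime p) → (∀ q ∈ m₂, IsPrime q) →
      Bisim Y (prodL m₁) → Bisim Y (prodL m₂) →
      (m₁.map cls).Perm (m₂.map cls))
    {X : Proc} {l₁ l₂ : List Proc} (hn : 2 * X.size ≤ n)
    (h1 : ∀ p ∈ l₁, IsPrime p) (h2 : ∀ q ∈ l₂, IsPrime q)
    (hb1 : Bisim X (prodL l₁)) (hb2 : Bisim X (prodL l₂))
    (hdisj : ∀ p ∈ l₁, ∀ q ∈ l₂, ¬ Bisim p q)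
    {pa} (hpa : pa ∈ l₁) :
    ∃ qb l₂', l₂.Perm (qb :: l₂') ∧ (prodL l₂').size + 1 ≤ pa.size := by
  obtain ⟨η, pa', hstep⟩ := exists_visible (prime_size_pos (h1 pa hpa))
  have hperm1 : l₁.Perm (pa :: l₁.erase pa) := List.perm_cons_erase hpa
  have hX1 : Bisim X (.par pa (prodL (l₁.erase pa))) :=
    btrans hb1 (sc_bisim (sc_prod_perm hperm1))
  -- step on the l₁-side
  have hstepW : Step (.par pa (prodL (l₁.erase pa))) (.act η)
      (.par pa' (prodL (l₁.erase pa))) := .parL _ hstep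
  have hWl2 : Bisim (.par pa (prodL (l₁.erase pa))) (prodL l₂) :=
    btrans (bsymm hX1) hb2
  obtain ⟨T, hTstep, hTb⟩ := bisim_step hWl2 hstepW
  obtain ⟨qb, qb', l₂', hqstep, hperm2, hTb2⟩ := prod_step_inv hTstep
  -- prime decompositions of the derivatives
  obtain ⟨A, hAprime, hAb⟩ := exists_prime_list pa'.size pa' le_rfl
  obtain ⟨B, hBprime, hBb⟩ := exists_prime_list qb'.size qb' le_rfl
  set Y := Proc.par pa' (prodL (l₁.erase pa)) with hY
  have hYb1 : Bisim Y (prodL (A ++ l₁.erase pa)) :=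
    btrans (bisim_par_right _ hAb) (sc_bisim (SC.symm (sc_prod_append _ _)))
  have hYb2 : Bisim Y (prodL (B ++ l₂')) := by
    refine btrans (btrans hTb hTb2) ?_
    exact btrans (bisim_par_right _ hBb) (sc_bisim (SC.symm (sc_prod_append _ _)))
  -- size bookkeeping
  have hszX1 : X.size = pa.size + (prodL (l₁.erase pa)).size := by
    have := bisim_size hX1; simpa [Proc.size] using this
  have hszpa : pa.size = pa'.size + 1 := step_size_act hstep
  have hszY : Y.size + 1 = X.size := by
    simp only [hY, Proc.size]; omega
  have hME : ((A ++ l₁.erase pa).map cls).Perm ((B ++ l₂').map cls) := by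
    refine ihU Y _ _ (by omega) ?_ ?_ hYb1 hYb2
    · intro p hp
      rcases List.mem_append.1 hp with h | h
      · exact hAprime p h
      · exact h1 p (List.mem_of_mem_erase h)
    · intro q hq
      rcases List.mem_append.1 hq with h | h
      · exact hBprime q h
      · exact h2 q ((hperm2.mem_iff).2 (List.mem_cons_of_mem _ h))
  -- l₂' classes are contained in A's classes
  have hsub : List.Subperm (l₂'.map cls) (A.map cls) := by
    refine List.subperm_ext_iff.2 ?_
    intro c hc
    have hcount := hME.count_eq c
    simp only [List.map_append, List.count_append] at hcount
    have hc2 : 0 < (l₂'.map cls).count c := List.count_pos_iff.2 hc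
    have hzero : (List.map cls (l₁.erase pa)).count c = 0 := by
      by_contra hpos
      obtain ⟨p, hp, hpc⟩ := count_map_pos (Nat.pos_of_ne_zero hpos)
      obtain ⟨q, hq, hqc⟩ := count_map_pos hc2
      exact hdisj p (List.mem_of_mem_erase hp) q ((hperm2.mem_iff).2 (List.mem_cons_of_mem _ hq))
        (cls_eq.1 (hpc.trans hqc.symm))
    -- also B side: count in (B++l₂') ≥ count l₂'
    omega
  -- sizes
  have hsize_sub : (prodL l₂').size ≤ (prodL A).size := by
    have hle : ((l₂'.map cls : List Cl) : Multiset Cl) ≤ (A.map cls : List Cl) :=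
      Multiset.coe_le.2 hsub
    obtain ⟨u, hu⟩ := Multiset.le_iff_exists_add.1 hle
    have : ((A.map cls).map csize).sum = ((l₂'.map cls).map csize).sum + (u.map csize).sum := by
      have := congrArg (fun s => (Multiset.map csize s).sum) hu
      simpa using this
    rw [sum_sizes_eq, sum_sizes_eq] at this
    omega
  have hszA : (prodL A).size = pa'.size := (bisim_size hAb).symm
  exact ⟨qb, l₂', hperm2, by omega⟩

theorem upd_main {n : ℕ}
    (ihC : ∀ (P Q R : Proc), P.size + Q.size + R.size < n →
      Bisim (.par P R) (.par Q R) → Bisim P Q)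
    (ihU : ∀ (Y : Proc) (m₁ m₂ : List Proc), 2 * Y.size < n →
      (∀ p ∈ m₁, IsPrime p) → (∀ q ∈ m₂, IsPrime q) →
      Bisim Y (prodL m₁) → Bisim Y (prodL m₂) →
      (m₁.map cls).Perm (m₂.map cls)) :
    ∀ (X : Proc) (l₁ l₂ : List Proc), 2 * X.size ≤ n →
      (∀ p ∈ l₁, IsPrime p) → (∀ q ∈ l₂, IsPrime q) →
      Bisim X (prodL l₁) → Bisim X (prodL l₂) →
      (l₁.map cls).Perm (l₂.map cls) := by
  intro X l₁ l₂ hn h1 h2 hb1 hb2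
  by_cases hshared : ∃ p ∈ l₁, ∃ q ∈ l₂, Bisim p q
  · obtain ⟨p, hp, q, hq, hpq⟩ := hshared
    have hperm1 : l₁.Perm (p :: l₁.erase p) := List.perm_cons_erase hp
    have hperm2 : l₂.Perm (q :: l₂.erase q) := List.perm_cons_erase hq
    have hA : Bisim X (.par p (prodL (l₁.erase p))) := btrans hb1 (sc_bisim (sc_prod_perm hperm1))
    have hB : Bisim X (.par q (prodL (l₂.erase q))) := btrans hb2 (sc_bisim (sc_prod_perm hperm2))
    -- cancel p
    have hcomp : Bisim (.par (prodL (l₁.erase p)) p) (.par (prodL (l₂.erase q)) p) := by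
      refine btrans (sc_bisim (SC.comm _ _)) (btrans (bsymm hA) (btrans hB ?_))
      exact btrans (bisim_par_right _ (bsymm hpq)) (sc_bisim (SC.comm _ _))
    have hpsz : 0 < p.size := prime_size_pos (h1 p hp)
    have hqsz : 0 < q.size := prime_size_pos (h2 q hq)
    have hsz1 : p.size + (prodL (l₁.erase p)).size = X.size := by
      have := bisim_size hA; simp [Proc.size] at this; omega
    have hsz2 : q.size + (prodL (l₂.erase q)).size = X.size := by
      have := bisim_size hB; simp [Proc.size] at this; omega
    have hcan : Bisim (prodL (l₁.erase p)) (prodL (l₂.erase q)) := by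
      refine ihC _ _ p (by omega) hcomp
    have hrec : ((l₁.erase p).map cls).Perm ((l₂.erase q).map cls) := by
      refine ihU (prodL (l₁.erase p)) _ _ (by omega) ?_ ?_ (bisim_refl _) hcan
      · exact fun x hx => h1 x (List.mem_of_mem_erase hx)
      · exact fun x hx => h2 x (List.mem_of_mem_erase hx)
    have : (l₁.map cls).Perm (cls p :: (l₁.erase p).map cls) := hperm1.map cls
    refine this.trans (List.Perm.trans ?_ (hperm2.map cls).symm)
    have hcls : cls p = cls q := cls_eq.2 hpq
    rw [hcls]
    exact hrec.cons (cls q)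
  · push_neg at hshared
    rcases eq_or_ne l₁ [] with rfl | hl1
    · rcases eq_or_ne l₂ [] with rfl | hl2
      · exact List.Perm.refl _
      · exfalso
        obtain ⟨q, hq⟩ := List.exists_mem_of_ne_nil l₂ hl2
        have hX0 : X.size = 0 := by simpa [prodL, Proc.size] using bisim_size hb1
        have := size_le_of_mem hq
        have := prime_size_pos (h2 q hq)
        have := bisim_size hb2
        omega
    rcases eq_or_ne l₂ [] with rfl | hl2
    · exfalso
      obtain ⟨p, hp⟩ := List.exists_mem_of_ne_nil l₁ hl1
      have hX0 : X.size = 0 := by simpa [prodL, Proc.size] using bisim_size hb2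
      have := size_le_of_mem hp
      have := prime_size_pos (h1 p hp)
      have := bisim_size hb1
      omega
    -- both nonempty; lengths are ≥ 2
    have hlen : ∀ (m₁ m₂ : List Proc), (∀ p ∈ m₁, IsPrime p) → (∀ q ∈ m₂, IsPrime q) →
        (∀ p ∈ m₁, ∀ q ∈ m₂, ¬ Bisim p q) → m₁ ≠ [] → m₂ ≠ [] →
        Bisim (prodL m₁) (prodL m₂) → 2 ≤ m₂.length := by
      intro m₁ m₂ hm1 hm2 hd hne1 hne2 hb
      by_contra hlt
      obtain ⟨q, t, rfl⟩ := List.exists_cons_of_ne_nil hne2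
      have ht : t = [] := by
        cases t with
        | nil => rfl
        | cons a t' => simp at hlt
      subst ht
      obtain ⟨p, hp⟩ := List.exists_mem_of_ne_nil m₁ hne1
      have hqp : Bisim (prodL m₁) q := btrans hb (sc_bisim (SC.unit q))
      -- m₁ must be a singleton too, else q would be decomposable... use primality of q
      have hperm : m₁.Perm (p :: m₁.erase p) := List.perm_cons_erase hp
      have : Bisim q (.par p (prodL (m₁.erase p))) :=
        btrans (bsymm hqp) (sc_bisim (sc_prod_perm hperm))
      rcases (hm2 q (List.mem_singleton_self q)).2 _ _ this with hc | hc
      · exact (hm1 p hp).1 hc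
      · -- prodL (m₁.erase p) ∼ nil, so m₁ = [p] and p ∼ q
        have : Bisim p q := by
          refine btrans ?_ (bsymm this)
          exact btrans (sc_bisim (SC.symm (SC.unit p))) (bisim_par_left p (bsymm hc))
        exact hd p hp q (List.mem_singleton_self q) this
    have hdisj' : ∀ q ∈ l₂, ∀ p ∈ l₁, ¬ Bisim q p := fun q hq p hp hc => hshared p hp q hq (bsymm hc)
    have hb12 : Bisim (prodL l₁) (prodL l₂) := btrans (bsymm hb1) hb2
    have hlen2 : 2 ≤ l₂.length := hlen l₁ l₂ h1 h2 hshared hl1 hl2 hb12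
    have hlen1 : 2 ≤ l₁.length := hlen l₂ l₁ h2 h1 hdisj' hl2 hl1 (bsymm hb12)
    exfalso
    -- attack with the smallest prime on each side
    obtain ⟨pa, hpa, hpamin⟩ := exists_min_size hl1
    obtain ⟨qb, l₂', hpermb, hqbsz⟩ := upd_attack ihU hn h1 h2 hb1 hb2 hshared hpa
    obtain ⟨qa, hqa, hqamin⟩ := exists_min_size hl2
    obtain ⟨pb, l₁', hperma, hpbsz⟩ := upd_attack ihU hn h2 h1 hb2 hb1 hdisj' hqa
    -- maxima
    obtain ⟨pM, hpM, hpMmax⟩ := exists_max_size hl1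
    obtain ⟨qM, hqM, hqMmax⟩ := exists_max_size hl2
    -- qb ∈ l₂ and its size exceeds max of l₁
    have hqbmem : qb ∈ l₂ := (hpermb.mem_iff).2 (by simp)
    have hpbmem : pb ∈ l₁ := (hperma.mem_iff).2 (by simp)
    -- size of qb: X = qb + prodL l₂'
    have hszqb : qb.size + (prodL l₂').size = X.size := by
      have := bisim_size (btrans hb2 (sc_bisim (sc_prod_perm hpermb)))
      simp [prodL, Proc.size] at this; omega
    have hszpb : pb.size + (prodL l₁').size = X.size := by
      have := bisim_size (btrans hb1 (sc_bisim (sc_prod_perm hperma)))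
      simp [prodL, Proc.size] at this; omega
    -- X ≥ pa + max(l₁) : the erase of pa contains an element of size ≥ pM.size
    have herase1 : pM.size ≤ (prodL (l₁.erase pa)).size := by
      rcases eq_or_ne pM pa with rfl | hne
      · -- all elements have equal (= min = max) size; erase is nonempty
        have hlen' : l₁.erase pM ≠ [] := by
          intro hc
          have := List.length_erase_of_mem hpM
          rw [hc] at this
          simp at this; omega
        obtain ⟨z, hz⟩ := List.exists_mem_of_ne_nil _ hlen'
        have hz1 : z ∈ l₁ := List.mem_of_mem_erase hz
        have := hpamin z hz1
        have := size_le_of_mem hz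
        omega
      · have : pM ∈ l₁.erase pa := by
          refine (List.mem_erase_of_ne hne).2 hpM
        exact size_le_of_mem this
    have hX1 : pa.size + (prodL (l₁.erase pa)).size = X.size := by
      have := bisim_size (btrans hb1 (sc_bisim (sc_prod_perm (List.perm_cons_erase hpa))))
      simp [prodL, Proc.size] at this; omega
    have herase2 : qM.size ≤ (prodL (l₂.erase qa)).size := by
      rcases eq_or_ne qM qa with rfl | hne
      · have hlen' : l₂.erase qM ≠ [] := by
          intro hc
          have := List.length_erase_of_mem hqM
          rw [hc] at this
          simp at this; omega
        obtain ⟨z, hz⟩ := List.exists_mem_of_ne_nil _ hlen'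
        have hz1 : z ∈ l₂ := List.mem_of_mem_erase hz
        have := hqamin z hz1
        have := size_le_of_mem hz
        omega
      · exact size_le_of_mem ((List.mem_erase_of_ne hne).2 hqM)
    have hX2 : qa.size + (prodL (l₂.erase qa)).size = X.size := by
      have := bisim_size (btrans hb2 (sc_bisim (sc_prod_perm (List.perm_cons_erase hqa))))
      simp [prodL, Proc.size] at this; omega
    -- conclude
    have h1max : pM.size < qb.size := by omega
    have h2max : qM.size < pb.size := by omega
    have := hpMmax pb hpbmem
    have := hqMmax qb hqbmem
    omega

end MC
namespace MC

theorem prime_prefix_form : ∀ {p : Proc}, IsPrime p → ∃ η Z, Bisim p (.pre η Z) := by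
  intro p
  induction p with
  | nil => intro h; exact absurd (bisim_refl _) h.1
  | pre η Z ih => intro h; exact ⟨η, Z, bisim_refl _⟩
  | par A B ihA ihB =>
    intro h
    rcases h.2 A B (bisim_refl _) with hA | hB
    · have hswap : Bisim (.par A B) B :=
        btrans (bisim_par_right B hA)
          (btrans (sc_bisim (SC.comm _ _)) (sc_bisim (SC.unit B)))
      obtain ⟨η, Z, hb⟩ := ihB (prime_congr hswap h)
      exact ⟨η, Z, btrans hswap hb⟩
    · have hswap : Bisim (.par A B) A := btrans (bisim_par_left A hB) (sc_bisim (SC.unit A))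
      obtain ⟨η, Z, hb⟩ := ihA (prime_congr hswap h)
      exact ⟨η, Z, btrans hswap hb⟩

theorem bisim_prod_replicate {l : List Proc} {u : Proc} (h : ∀ p ∈ l, Bisim p u) :
    Bisim (prodL l) (prodL (List.replicate l.length u)) := by
  induction l with
  | nil => exact bisim_refl _
  | cons a t ih =>
    simp only [List.length_cons, List.replicate_succ]
    exact bisim_par (h a (by simp)) (ih (fun p hp => h p (by simp [hp])))

theorem bisim_pre_act_eq {a b : Act} {X Y : Proc} (h : Bisim (.pre a X) (.pre b Y)) : a = b := by
  obtain ⟨T, hT, _⟩ := bisim_step h (Step.pre a X)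
  obtain ⟨heq, _⟩ := step_pre_inv hT
  exact Lab.act.inj heq

/-- Prefix processes are bisimilar to powers of a prime prefix. -/
theorem prefix_power {n : ℕ}
    (ihU : ∀ (Y : Proc) (m₁ m₂ : List Proc), 2 * Y.size < n →
      (∀ p ∈ m₁, IsPrime p) → (∀ q ∈ m₂, IsPrime q) →
      Bisim Y (prodL m₁) → Bisim Y (prodL m₂) →
      (m₁.map cls).Perm (m₂.map cls))
    {η : Act} {W : Proc} (hn : 2 * W.size < n) :
    ∃ S r, IsPrime (.pre η S) ∧
      Bisim (.pre η W) (prodL (List.replicate (r+1) (.pre η S))) ∧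
      Bisim W (.par S (prodL (List.replicate r (.pre η S)))) := by
  obtain ⟨l, hlp, hbl⟩ := exists_prime_list (Proc.pre η W).size _ le_rfl
  have hlne : l ≠ [] := by
    intro hc
    have := bisim_size hbl
    rw [hc] at this
    simp [prodL, Proc.size] at this
  have hdata : ∀ p ∈ l, ∃ Z, Bisim p (.pre η Z) ∧ Bisim W (.par Z (prodL (l.erase p))) := by
    intro p hp
    obtain ⟨η', Z, hbp⟩ := prime_prefix_form (hlp p hp)
    have hX : Bisim (.pre η W) (.par p (prodL (l.erase p))) :=
      btrans hbl (sc_bisim (sc_prod_perm (List.perm_cons_erase hp)))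
    obtain ⟨p₀, hp₀, hZp₀⟩ := bisim_step (bsymm hbp) (Step.pre η' Z)
    have hlift : Step (.par p (prodL (l.erase p))) (.act η') (.par p₀ (prodL (l.erase p))) :=
      .parL _ hp₀
    obtain ⟨T, hT, hbT⟩ := bisim_step (bsymm hX) hlift
    obtain ⟨heq, rfl⟩ := step_pre_inv hT
    obtain rfl : η' = η := Lab.act.inj heq
    exact ⟨Z, hbp, btrans (bsymm hbT) (bisim_par_right _ (bsymm hZp₀))⟩
  have hcls : ∀ p ∈ l, ∀ q ∈ l, cls p = cls q := by
    intro p hp q hq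
    by_contra hne
    obtain ⟨Zp, hbp, hWp⟩ := hdata p hp
    obtain ⟨Zq, hbq, hWq⟩ := hdata q hq
    obtain ⟨A, hAp, hAb⟩ := exists_prime_list Zp.size Zp le_rfl
    obtain ⟨B, hBp, hBb⟩ := exists_prime_list Zq.size Zq le_rfl
    have hb1 : Bisim W (prodL (A ++ l.erase p)) :=
      btrans hWp (btrans (bisim_par_right _ hAb) (sc_bisim (SC.symm (sc_prod_append _ _))))
    have hb2 : Bisim W (prodL (B ++ l.erase q)) :=
      btrans hWq (btrans (bisim_par_right _ hBb) (sc_bisim (SC.symm (sc_prod_append _ _))))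
    have hperm : ((A ++ l.erase p).map cls).Perm ((B ++ l.erase q).map cls) := by
      refine ihU W _ _ hn ?_ ?_ hb1 hb2
      · intro x hx
        rcases List.mem_append.1 hx with h | h
        · exact hAp x h
        · exact hlp x (List.mem_of_mem_erase h)
      · intro x hx
        rcases List.mem_append.1 hx with h | h
        · exact hBp x h
        · exact hlp x (List.mem_of_mem_erase h)
    have hcount := hperm.count_eq (cls q)
    simp only [List.map_append, List.count_append] at hcount
    -- counts in the erased lists
    have e1 : ((l.erase p).map cls).count (cls q) = (l.map cls).count (cls q) := by
      have h' := ((List.perm_cons_erase hp).map cls).count_eq (cls q)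
      simp only [List.map_cons, List.count_cons, beq_iff_eq] at h'
      rw [if_neg (fun hc => hne hc)] at h'
      omega
    have e2 : ((l.erase q).map cls).count (cls q) + 1 = (l.map cls).count (cls q) := by
      have h' := ((List.perm_cons_erase hq).map cls).count_eq (cls q)
      simp only [List.map_cons, List.count_cons, beq_iff_eq] at h'
      simp at h'
      omega
    have hBpos : 0 < (B.map cls).count (cls q) := by omega
    obtain ⟨b, hbB, hbc⟩ := count_map_pos hBpos
    -- size contradiction
    have hsb : b.size ≤ (prodL B).size := size_le_of_mem hbB
    have hszB : (prodL B).size = Zq.size := (bisim_size hBb).symm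
    have hq1 : q.size = 1 + Zq.size := by
      have := bisim_size hbq; simpa [Proc.size] using this
    have hbq' : b.size = q.size := by
      have : cls b = cls q := hbc
      have := congrArg csize this
      simpa using this
    omega
  obtain ⟨p₀, t, rfl⟩ := List.exists_cons_of_ne_nil hlne
  obtain ⟨S, hbp₀, hWc⟩ := hdata p₀ (by simp)
  have hall : ∀ p ∈ (p₀ :: t), Bisim p (.pre η S) := by
    intro p hp
    exact btrans (cls_eq.1 (hcls p hp p₀ (by simp))) hbp₀
  refine ⟨S, t.length, prime_congr hbp₀ (hlp p₀ (by simp)), ?_, ?_⟩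
  · refine btrans hbl ?_
    have := bisim_prod_replicate hall
    simpa using this
  · have herase : (p₀ :: t).erase p₀ = t := List.erase_cons_head p₀ t
    rw [herase] at hWc
    refine btrans hWc (bisim_par_left _ ?_)
    exact bisim_prod_replicate (fun p hp => hall p (by simp [hp]))

/-- The crucial refutation: the "nested-nested" pattern is impossible. -/
theorem no_star {n : ℕ}
    (ihU : ∀ (Y : Proc) (m₁ m₂ : List Proc), 2 * Y.size < n →
      (∀ p ∈ m₁, IsPrime p) → (∀ q ∈ m₂, IsPrime q) →
      Bisim Y (prodL m₁) → Bisim Y (prodL m₂) →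
      (m₁.map cls).Perm (m₂.map cls))
    {η : Act} {W V W' V' : Proc}
    (hn : 2 * (W.size + V.size) + 2 ≤ n)
    (hW : Step W (.act η.co) W') (hV : Step V (.act η) V')
    (hb : Bisim (.par W' (.pre η.co V)) (.par (.pre η W) V')) : False := by
  obtain ⟨S, m, hSp, hSW, hSc⟩ := prefix_power (η := η) (W := W) ihU (by omega)
  obtain ⟨T, k, hTp, hTV, hTc⟩ := prefix_power (η := η.co) (W := V) ihU (by omega)
  -- transfer the step of W
  obtain ⟨U, hUstep, hbU⟩ := bisim_step hSc hW
  have hUdec : ∃ S₁, Step S (.act η.co) S₁ ∧ U = .par S₁ (prodL (List.replicate m (.pre η S))) := by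
    rcases step_par_inv hUstep with ⟨S₁, hS₁, rfl⟩ | ⟨U₂, hU₂, rfl⟩ | ⟨_, _, _, heq, _, _, _⟩
    · exact ⟨S₁, hS₁, rfl⟩
    · exfalso
      obtain ⟨p, p', l', hpstep, hperm, _⟩ := prod_step_inv hU₂
      have : p = .pre η S := List.eq_of_mem_replicate ((hperm.mem_iff).2 (by simp))
      subst this
      obtain ⟨heq, _⟩ := step_pre_inv hpstep
      exact co_ne η (Lab.act.inj heq)
    · exact absurd heq (by simp)
  obtain ⟨S₁, hS₁, rfl⟩ := hUdec
  -- transfer the step of V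
  obtain ⟨U', hU'step, hbU'⟩ := bisim_step hTc hV
  have hU'dec : ∃ T₁, Step T (.act η) T₁ ∧ U' = .par T₁ (prodL (List.replicate k (.pre η.co T))) := by
    rcases step_par_inv hU'step with ⟨T₁, hT₁, rfl⟩ | ⟨U₂, hU₂, rfl⟩ | ⟨_, _, _, heq, _, _, _⟩
    · exact ⟨T₁, hT₁, rfl⟩
    · exfalso
      obtain ⟨p, p', l', hpstep, hperm, _⟩ := prod_step_inv hU₂
      have : p = .pre η.co T := List.eq_of_mem_replicate ((hperm.mem_iff).2 (by simp))
      subst this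
      obtain ⟨heq, _⟩ := step_pre_inv hpstep
      exact co_ne η (Lab.act.inj heq).symm
    · exact absurd heq (by simp)
  obtain ⟨T₁, hT₁, rfl⟩ := hU'dec
  -- prime decompositions of S₁ and T₁
  obtain ⟨LS, hLSp, hLSb⟩ := exists_prime_list S₁.size S₁ le_rfl
  obtain ⟨LT, hLTp, hLTb⟩ := exists_prime_list T₁.size T₁ le_rfl
  set X := Proc.par W' (.pre η.co V) with hX
  have hxb1 : Bisim X (prodL ((LS ++ List.replicate m (.pre η S)) ++ List.replicate (k+1) (.pre η.co T))) := by
    refine btrans ?_ (sc_bisim (SC.symm (sc_prod_append _ _)))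
    refine bisim_par ?_ hTV
    refine btrans hbU ?_
    exact btrans (bisim_par_right _ hLSb) (sc_bisim (SC.symm (sc_prod_append _ _)))
  have hxb2 : Bisim X (prodL ((LT ++ List.replicate k (.pre η.co T)) ++ List.replicate (m+1) (.pre η S))) := by
    refine btrans hb ?_
    refine btrans (sc_bisim (SC.comm _ _)) ?_
    refine btrans ?_ (sc_bisim (SC.symm (sc_prod_append _ _)))
    refine bisim_par ?_ hSW
    refine btrans hbU' ?_
    exact btrans (bisim_par_right _ hLTb) (sc_bisim (SC.symm (sc_prod_append _ _)))
  have hXsize : X.size = W.size + V.size := by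
    have h1 := step_size_act hW
    simp only [hX, Proc.size]
    omega
  have hperm : (((LS ++ List.replicate m (Proc.pre η S)) ++ List.replicate (k+1) (Proc.pre η.co T)).map cls).Perm
      (((LT ++ List.replicate k (Proc.pre η.co T)) ++ List.replicate (m+1) (Proc.pre η S)).map cls) := by
    refine ihU X _ _ (by omega) ?_ ?_ hxb1 hxb2
    · intro x hx
      rcases List.mem_append.1 hx with hx | hx
      · rcases List.mem_append.1 hx with hx | hx
        · exact hLSp x hx
        · rw [List.eq_of_mem_replicate hx]; exact hSp
      · rw [List.eq_of_mem_replicate hx]; exact hTp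
    · intro x hx
      rcases List.mem_append.1 hx with hx | hx
      · rcases List.mem_append.1 hx with hx | hx
        · exact hLTp x hx
        · rw [List.eq_of_mem_replicate hx]; exact hTp
      · rw [List.eq_of_mem_replicate hx]; exact hSp
  have hdist : cls (.pre η.co T) ≠ cls (.pre η S) := by
    intro hc
    exact co_ne η (bisim_pre_act_eq (cls_eq.1 hc))
  have hcount := hperm.count_eq (cls (.pre η S))
  simp only [List.map_append, List.count_append, List.map_replicate] at hcount
  have r1 : ∀ j, (List.replicate j (cls (.pre η S))).count (cls (.pre η S)) = j := by
    intro j; simp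
  have r2 : ∀ j, (List.replicate j (cls (.pre η.co T))).count (cls (.pre η S)) = 0 := by
    intro j; simp [List.count_replicate, hdist]
  rw [r1, r1, r2, r2] at hcount
  have hpos : 0 < (LS.map cls).count (cls (.pre η S)) := by omega
  obtain ⟨s, hsLS, hsc⟩ := count_map_pos hpos
  have h1 : s.size = 1 + S.size := by
    have := congrArg csize hsc
    simpa [Proc.size] using this
  have h2 : s.size ≤ (prodL LS).size := size_le_of_mem hsLS
  have h3 : (prodL LS).size = S₁.size := (bisim_size hLSb).symm
  have h4 : S.size = S₁.size + 1 := step_size_act hS₁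
  omega

end MC
namespace MC

theorem tau_decomp {P P'} (h : Step P .tau P') :
    ∃ η X Y, Step P (.act η) X ∧ Step X (.act η.co) P' ∧
      Step P (.act η.co) Y ∧ Step Y (.act η) P' := by
  generalize hμ : Lab.tau = μ at h
  induction h with
  | pre => exact absurd hμ (by simp)
  | syn h1 h2 ih1 ih2 =>
    rename_i A A' B B' η
    exact ⟨η, .par A' B, .par A B', .parL _ h1, .parR _ h2, .parR _ h2, .parL _ h1⟩
  | parL Q h ih =>
    obtain ⟨η, X, Y, s1, s2, s3, s4⟩ := ih hμ
    exact ⟨η, .par X Q, .par Y Q, .parL _ s1, .parL _ s2, .parL _ s3, .parL _ s4⟩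
  | parR P h ih =>
    obtain ⟨η, X, Y, s1, s2, s3, s4⟩ := ih hμ
    exact ⟨η, .par P X, .par P Y, .parR _ s1, .parR _ s2, .parR _ s3, .parR _ s4⟩

theorem seq_decomp : ∀ {Q Q₁ Q₂ : Proc} {α : Act}, Step Q (.act α) Q₁ →
    Step Q₁ (.act α.co) Q₂ →
    Step Q .tau Q₂ ∨
      ∃ W W' N, SC Q (.par (.pre α W) N) ∧ Step W (.act α.co) W' ∧ SC Q₂ (.par W' N) := by
  intro Q Q₁ Q₂ α h1
  revert Q₂
  generalize hμ : Lab.act α = μ at h1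
  induction h1 with
  | pre η P =>
    intro Q₂ h2
    obtain rfl : α = η := Lab.act.inj hμ
    exact .inr ⟨P, Q₂, .nil, SC.symm (SC.unit _), h2, SC.symm (SC.unit _)⟩
  | parL C h ih =>
    intro Q₂ h2
    rcases step_par_inv h2 with ⟨L₂, hL₂, rfl⟩ | ⟨C₂, hC₂, rfl⟩ | ⟨_, _, _, heq, _, _, _⟩
    · rcases ih hμ hL₂ with hτ | ⟨W, W', N, s1, hs, s2⟩
      · exact .inl (.parL _ hτ)
      · refine .inr ⟨W, W', .par N C, ?_, hs, ?_⟩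
        · exact (SC.par s1 (SC.refl C)).trans (SC.symm (SC.assoc _ _ _))
        · exact (SC.par s2 (SC.refl C)).trans (SC.symm (SC.assoc _ _ _))
    · subst hμ
      exact .inl (.syn h hC₂)
    · exact absurd heq (by simp)
  | parR C h ih =>
    intro Q₂ h2
    rcases step_par_inv h2 with ⟨C₂, hC₂, rfl⟩ | ⟨R₂, hR₂, rfl⟩ | ⟨_, _, _, heq, _, _, _⟩
    · subst hμ
      left
      exact .syn hC₂ (by rw [co_co]; exact h)
    · rcases ih hμ hR₂ with hτ | ⟨W, W', N, s1, hs, s2⟩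
      · exact .inl (.parR _ hτ)
      · refine .inr ⟨W, W', .par N C, ?_, hs, ?_⟩
        · exact (SC.par (SC.refl C) s1).trans ((SC.comm _ _).trans (SC.symm (SC.assoc _ _ _)))
        · exact (SC.par (SC.refl C) s2).trans ((SC.comm _ _).trans (SC.symm (SC.assoc _ _ _)))
    · exact absurd heq (by simp)
  | syn h1 h2 ih1 ih2 => exact absurd hμ (by simp)

theorem lemV {n : ℕ}
    (ihC : ∀ (P Q R : Proc), P.size + Q.size + R.size < n →
      Bisim (.par P R) (.par Q R) → Bisim P Q)
    {P Q R : Proc} (hn : P.size + Q.size + R.size ≤ n)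
    (hb : Bisim (.par P R) (.par Q R)) :
    ∀ η P', Step P (.act η) P' → ∃ Q', Step Q (.act η) Q' ∧ Bisim P' Q' := by
  intro η P' hs
  obtain ⟨T, hT, hbT⟩ := bisim_step hb (Step.parL R hs)
  rcases step_par_inv hT with ⟨Q', hQ, rfl⟩ | ⟨R₁, hR, rfl⟩ | ⟨_, _, _, heq, _, _, _⟩
  · refine ⟨Q', hQ, ihC P' Q' R ?_ hbT⟩
    have := step_size_act hs
    have := step_size_act hQ
    omega
  · have inner : ∀ (k : ℕ) (A B : Proc), A.size ≤ k → B.size < R.size → Step A (.act η) B →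
        Bisim (.par P' A) (.par Q B) → ∃ Q', Step Q (.act η) Q' ∧ Bisim P' Q' := by
      intro k
      induction k with
      | zero =>
        intro A B hA hB hstep _
        exact absurd (size_pos_of_step hstep) (by omega)
      | succ k ihk =>
        intro A B hA hB hstep hbb
        obtain ⟨T₂, hT₂, hbT₂⟩ := bisim_step hbb (Step.parR P' hstep)
        rcases step_par_inv hT₂ with ⟨Q', hQ, rfl⟩ | ⟨B₁, hB₁, rfl⟩ | ⟨_, _, _, heq, _, _, _⟩
        · refine ⟨Q', hQ, ihC P' Q' B ?_ hbT₂⟩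
          have := step_size_act hs
          have := step_size_act hQ
          omega
        · refine ihk B B₁ ?_ ?_ hB₁ hbT₂
          · have := step_size_act hstep; omega
          · have := step_size_act hB₁; omega
        · exact absurd heq (by simp)
    refine inner R.size R R₁ le_rfl ?_ hR hbT
    have := step_size_act hR; omega
  · exact absurd heq (by simp)

theorem lemT {n : ℕ}
    (ihC : ∀ (P Q R : Proc), P.size + Q.size + R.size < n →
      Bisim (.par P R) (.par Q R) → Bisim P Q)
    (ihU : ∀ (Y : Proc) (m₁ m₂ : List Proc), 2 * Y.size < n →
      (∀ p ∈ m₁, IsPrime p) → (∀ q ∈ m₂, IsPrime q) →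
      Bisim Y (prodL m₁) → Bisim Y (prodL m₂) →
      (m₁.map cls).Perm (m₂.map cls))
    {P Q R : Proc} (hn : P.size + Q.size + R.size ≤ n) (hPQ : P.size = Q.size)
    (hb : Bisim (.par P R) (.par Q R)) :
    ∀ P', Step P .tau P' → ∃ Q', Step Q .tau Q' ∧ Bisim P' Q' := by
  intro P' hs
  obtain ⟨η, X, Y, hPX, hXP', hPY, hYP'⟩ := tau_decomp hs
  obtain ⟨Q₁, hQ₁, hbX⟩ := lemV ihC hn hb η X hPX
  obtain ⟨Q₂, hQ₂, hbP'⟩ := bisim_step hbX hXP'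
  obtain ⟨Q₁', hQ₁', hbY⟩ := lemV ihC hn hb η.co Y hPY
  obtain ⟨Q₂', hQ₂', hbP''⟩ := bisim_step hbY hYP'
  rcases seq_decomp hQ₁ hQ₂ with hτ | ⟨W, W', N, s1, hsW, s2⟩
  · exact ⟨Q₂, hτ, hbP'⟩
  have hP'WN : Bisim P' (.par W' N) := btrans hbP' (sc_bisim s2)
  -- transfer the second pair of steps along s1
  obtain ⟨K₁, hK₁, sK₁⟩ := (sc_moves s1).1 _ _ hQ₁'
  rcases step_par_inv hK₁ with ⟨A', hA, rfl⟩ | ⟨N₁, hN₁, rfl⟩ | ⟨_, _, _, heq, _, _, _⟩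
  · obtain ⟨heq, _⟩ := step_pre_inv hA
    exact absurd (Lab.act.inj heq) (co_ne η)
  · obtain ⟨K₂, hK₂, sK₂⟩ := (sc_moves sK₁).1 _ _ hQ₂'
    rcases step_par_inv hK₂ with ⟨A', hA, rfl⟩ | ⟨N₂, hN₂, rfl⟩ | ⟨_, _, _, heq, _, _, _⟩
    · obtain ⟨-, hAW⟩ := step_pre_inv hA
      have hτ : Step (.par (.pre η W) N) .tau (.par A' N₁) := by
        rw [hAW]; exact .syn (.pre _ _) hN₁
      obtain ⟨Z, hZ, sZ⟩ := (sc_moves (SC.symm s1)).1 _ _ hτ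
      exact ⟨Z, hZ, btrans hbP'' (btrans (sc_bisim sK₂) (sc_bisim sZ))⟩
    · have hP'2 : Bisim P' (.par (.pre η W) N₂) := btrans hbP'' (sc_bisim sK₂)
      have hN₂' : Step N₁ (.act η.co.co) N₂ := by rw [co_co]; exact hN₂
      rcases seq_decomp hN₁ hN₂' with hτN | ⟨V, V₁, M, t1, hsV, t2⟩
      · have hτ : Step (.par (.pre η W) N) .tau (.par (.pre η W) N₂) := .parR _ hτN
        obtain ⟨Z, hZ, sZ⟩ := (sc_moves (SC.symm s1)).1 _ _ hτ
        exact ⟨Z, hZ, btrans hP'2 (sc_bisim sZ)⟩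
      · exfalso
        have hsV' : Step V (.act η) V₁ := by rw [co_co] at hsV; exact hsV
        have e1 : Bisim P' (.par (.par (.pre η W) V₁) M) :=
          btrans hP'2 (btrans (bisim_par_left _ (sc_bisim t2)) (sc_bisim (SC.assoc _ _ _)))
        have e2 : Bisim P' (.par (.par W' (.pre η.co V)) M) :=
          btrans hP'WN (btrans (bisim_par_left _ (sc_bisim t1)) (sc_bisim (SC.assoc _ _ _)))
        -- size bookkeeping
        have hQs : Q.size = 1 + W.size + N.size := by
          have := bisim_size (sc_bisim s1); simpa [Proc.size] using this
        have hNs : N.size = 1 + V.size + M.size := by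
          have := bisim_size (sc_bisim t1); simpa [Proc.size] using this
        have hW's : W.size = W'.size + 1 := step_size_act hsW
        have hV₁s : V.size = V₁.size + 1 := step_size_act hsV'
        have hcan : Bisim (.par W' (.pre η.co V)) (.par (.pre η W) V₁) := by
          refine ihC _ _ M ?_ (btrans (bsymm e2) e1)
          simp only [Proc.size]
          omega
        exact no_star ihU (by omega) hsW hsV' hcan
    · exact absurd heq (by simp)
  · exact absurd heq (by simp)

theorem master : ∀ n : ℕ,
    (∀ (P Q R : Proc), P.size + Q.size + R.size ≤ n →
      Bisim (.par P R) (.par Q R) → Bisim P Q) ∧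
    (∀ (X : Proc) (l₁ l₂ : List Proc), 2 * X.size ≤ n →
      (∀ p ∈ l₁, IsPrime p) → (∀ q ∈ l₂, IsPrime q) →
      Bisim X (prodL l₁) → Bisim X (prodL l₂) →
      (l₁.map cls).Perm (l₂.map cls)) := by
  intro n
  induction n using Nat.strong_induction_on with
  | _ n ih =>
  have ihC : ∀ (P Q R : Proc), P.size + Q.size + R.size < n →
      Bisim (.par P R) (.par Q R) → Bisim P Q := by
    intro P Q R h hb
    exact (ih _ h).1 P Q R le_rfl hb
  have ihU : ∀ (Y : Proc) (m₁ m₂ : List Proc), 2 * Y.size < n →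
      (∀ p ∈ m₁, IsPrime p) → (∀ q ∈ m₂, IsPrime q) →
      Bisim Y (prodL m₁) → Bisim Y (prodL m₂) →
      (m₁.map cls).Perm (m₂.map cls) := by
    intro Y m₁ m₂ h h1 h2 hb1 hb2
    exact (ih _ h).2 Y m₁ m₂ le_rfl h1 h2 hb1 hb2
  constructor
  · -- cancellation at level n
    intro P Q R hn hb
    have hPQ : P.size = Q.size := by
      have := bisim_size hb; simp [Proc.size] at this; omega
    refine ⟨fun X Y => Bisim X Y ∨ (X = P ∧ Y = Q) ∨ (X = Q ∧ Y = P), ⟨?_, ?_⟩,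
      .inr (.inl ⟨rfl, rfl⟩)⟩
    · rintro X Y (h | ⟨rfl, rfl⟩ | ⟨rfl, rfl⟩)
      · exact .inl (bsymm h)
      · exact .inr (.inr ⟨rfl, rfl⟩)
      · exact .inr (.inl ⟨rfl, rfl⟩)
    · rintro X Y μ X' (h | ⟨rfl, rfl⟩ | ⟨rfl, rfl⟩) hstep
      · obtain ⟨Y', hY, h'⟩ := bisim_step h hstep
        exact ⟨Y', hY, .inl h'⟩
      · cases μ with
        | act η =>
          obtain ⟨Q', hQ, h'⟩ := lemV ihC hn hb η X' hstep
          exact ⟨Q', hQ, .inl h'⟩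
        | tau =>
          obtain ⟨Q', hQ, h'⟩ := lemT ihC ihU hn hPQ hb X' hstep
          exact ⟨Q', hQ, .inl h'⟩
      · cases μ with
        | act η =>
          obtain ⟨Q', hQ, h'⟩ := lemV ihC (by omega) (bsymm hb) η X' hstep
          exact ⟨Q', hQ, .inl h'⟩
        | tau =>
          obtain ⟨Q', hQ, h'⟩ := lemT ihC ihU (by omega) hPQ.symm (bsymm hb) X' hstep
          exact ⟨Q', hQ, .inl h'⟩
  · exact upd_main ihC ihU

end MC

/-- cancellation for strong bisimilarity in microCCS. -/
theorem bisim_cancellation {P Q R : Proc}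
    (h : Bisim (.par P R) (.par Q R)) : Bisim P Q :=
  (MC.master (P.size + Q.size + R.size)).1 P Q R le_rfl h
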